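/- Modal companion theorem for contraposition logic: For every formula φ of the language L, CoPC ⊢ φ if and only if CoS4 ⊢ φ^□. -/
import Mathlib


inductive Form : Type
  | var : ℕ → Form
  | top : Form
  | and : Form → Form → Form
  | or : Form → Form → Form
  | imp : Form → Form → Form
  | neg : Form → Form

def Form.iff (φ ψ : Form) : Form := (φ.imp ψ).and (ψ.imp φ)

inductive Deriv (Ax : Form → Prop) : Form → Prop
  | ax : ∀ {φ : Form}, Ax φ → Deriv Ax φ
  | imp1 : ∀ φ ψ : Form, Deriv Ax (φ.imp (ψ.imp φ))
  | imp2 : ∀ φ ψ χ : Form, Deriv Ax ((φ.imp (ψ.imp χ)).imp ((φ.imp ψ).imp (φ.imp χ)))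
  | topI : Deriv Ax Form.top
  | andE1 : ∀ φ ψ : Form, Deriv Ax ((φ.and ψ).imp φ)
  | andE2 : ∀ φ ψ : Form, Deriv Ax ((φ.and ψ).imp ψ)
  | andI : ∀ φ ψ : Form, Deriv Ax (φ.imp (ψ.imp (φ.and ψ)))
  | orI1 : ∀ φ ψ : Form, Deriv Ax (φ.imp (φ.or ψ))
  | orI2 : ∀ φ ψ : Form, Deriv Ax (ψ.imp (φ.or ψ))
  | orE : ∀ φ ψ χ : Form, Deriv Ax ((φ.imp χ).imp ((ψ.imp χ).imp ((φ.or ψ).imp χ)))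
  | negAx : ∀ φ ψ : Form, Deriv Ax ((Form.iff φ ψ).imp (Form.iff φ.neg ψ.neg))
  | mp : ∀ {φ ψ : Form}, Deriv Ax (φ.imp ψ) → Deriv Ax φ → Deriv Ax ψ

def NThm : Form → Prop := Deriv fun _ => False

def NeFThm : Form → Prop := Deriv fun χ => ∃ φ ψ : Form, χ = (φ.and φ.neg).imp ψ.neg

def CoPCThm : Form → Prop := Deriv fun χ => ∃ φ ψ : Form, χ = (φ.imp ψ).imp (ψ.neg.imp φ.neg)

def MPCThm : Form → Prop := Deriv fun χ => ∃ φ : Form, χ = (φ.imp φ.neg).imp φ.neg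

inductive MForm : Type
  | var : ℕ → MForm
  | bot : MForm
  | top : MForm
  | and : MForm → MForm → MForm
  | or : MForm → MForm → MForm
  | imp : MForm → MForm → MForm
  | box : MForm → MForm
  | bbox : MForm → MForm

def MForm.miff (φ ψ : MForm) : MForm := (φ.imp ψ).and (ψ.imp φ)

def MTaut (φ : MForm) : Prop :=
  ∀ v : MForm → Bool,
    v MForm.bot = false → v MForm.top = true →
    (∀ a b : MForm, v (a.and b) = (v a && v b)) →
    (∀ a b : MForm, v (a.or b) = (v a || v b)) →
    (∀ a b : MForm, v (a.imp b) = (!(v a) || v b)) →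
    v φ = true

inductive NS4 : MForm → Prop
  | taut : ∀ {φ : MForm}, MTaut φ → NS4 φ
  | axK : ∀ φ ψ : MForm, NS4 (((φ.imp ψ).box).imp ((φ.box).imp (ψ.box)))
  | axT : ∀ φ : MForm, NS4 ((φ.box).imp φ)
  | ax4 : ∀ φ : MForm, NS4 ((φ.box).imp (φ.box.box))
  | axN : ∀ φ ψ : MForm, NS4 (((φ.miff ψ).box).imp ((φ.bbox).miff (ψ.bbox)))
  | axB : ∀ φ : MForm, NS4 ((φ.bbox).imp (φ.bbox.box))
  | mp : ∀ {φ ψ : MForm}, NS4 (φ.imp ψ) → NS4 φ → NS4 ψ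
  | nec : ∀ {φ : MForm}, NS4 φ → NS4 (φ.box)

def MSat {W : Type*} (le : W → W → Prop) (N : Set W → Set W) (V : ℕ → Set W) : MForm → Set W
  | .var p => V p
  | .bot => ∅
  | .top => Set.univ
  | .and φ ψ => MSat le N V φ ∩ MSat le N V ψ
  | .or φ ψ => MSat le N V φ ∪ MSat le N V ψ
  | .imp φ ψ => {w | w ∈ MSat le N V φ → w ∈ MSat le N V ψ}
  | .box φ => {w | ∀ v, le w v → v ∈ MSat le N V φ}
  | .bbox φ => N (MSat le N V φ)

def godelT : Form → MForm
  | .var p => (MForm.var p).box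
  | .top => MForm.top
  | .and φ ψ => (godelT φ).and (godelT ψ)
  | .or φ ψ => (godelT φ).or (godelT ψ)
  | .imp φ ψ => ((godelT φ).imp (godelT ψ)).box
  | .neg φ => (godelT φ).bbox

/-- The bi-modal system `CoS4`: `S4` for `□` together with
`□(φ → ψ) → (■ψ → ■φ)` and `■φ → □■φ`. -/
inductive CoS4 : MForm → Prop
  | taut : ∀ {φ : MForm}, MTaut φ → CoS4 φ
  | axK : ∀ φ ψ : MForm, CoS4 (((φ.imp ψ).box).imp ((φ.box).imp (ψ.box)))
  | axT : ∀ φ : MForm, CoS4 ((φ.box).imp φ)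
  | ax4 : ∀ φ : MForm, CoS4 ((φ.box).imp (φ.box.box))
  | axCo : ∀ φ ψ : MForm, CoS4 (((φ.imp ψ).box).imp ((ψ.bbox).imp (φ.bbox)))
  | axB : ∀ φ : MForm, CoS4 ((φ.bbox).imp (φ.bbox.box))
  | mp : ∀ {φ ψ : MForm}, CoS4 (φ.imp ψ) → CoS4 φ → CoS4 ψ
  | nec : ∀ {φ : MForm}, CoS4 φ → CoS4 (φ.box)


/-! ### Auxiliary development -/

open Classical

section Tautologies

/-- A small helper to prove `MTaut` facts. -/
lemma mtaut_top : MTaut MForm.top := fun _ _ ht _ _ _ => ht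

lemma mtaut_cmp (a b c : MForm) :
    MTaut ((a.imp b).imp ((b.imp c).imp (a.imp c))) := by
  intro v _ _ _ _ hi
  simp only [hi]
  cases v a <;> cases v b <;> cases v c <;> rfl

lemma mtaut_weak (a c : MForm) : MTaut (c.imp (a.imp c)) := by
  intro v _ _ _ _ hi
  simp only [hi]
  cases v a <;> cases v c <;> rfl

lemma mtaut_andE1 (a b : MForm) : MTaut ((a.and b).imp a) := by
  intro v _ _ ha _ hi
  simp only [hi, ha]
  cases v a <;> cases v b <;> rfl

lemma mtaut_andE2 (a b : MForm) : MTaut ((a.and b).imp b) := by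
  intro v _ _ ha _ hi
  simp only [hi, ha]
  cases v a <;> cases v b <;> rfl

lemma mtaut_andI (a b : MForm) : MTaut (a.imp (b.imp (a.and b))) := by
  intro v _ _ ha _ hi
  simp only [hi, ha]
  cases v a <;> cases v b <;> rfl

lemma mtaut_orI1 (a b : MForm) : MTaut (a.imp (a.or b)) := by
  intro v _ _ _ ho hi
  simp only [hi, ho]
  cases v a <;> cases v b <;> rfl

lemma mtaut_orI2 (a b : MForm) : MTaut (b.imp (a.or b)) := by
  intro v _ _ _ ho hi
  simp only [hi, ho]
  cases v a <;> cases v b <;> rfl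

lemma mtaut_orE (a b z : MForm) :
    MTaut ((a.imp z).imp ((b.imp z).imp ((a.or b).imp z))) := by
  intro v _ _ _ ho hi
  simp only [hi, ho]
  cases v a <;> cases v b <;> cases v z <;> rfl

lemma mtaut_imp2 (a x y z : MForm) :
    MTaut ((x.imp (y.imp z)).imp ((a.imp x).imp ((a.imp y).imp (a.imp z)))) := by
  intro v _ _ _ _ hi
  simp only [hi]
  cases v a <;> cases v x <;> cases v y <;> cases v z <;> rfl

lemma mtaut_andstep (a b x y z : MForm) :
    MTaut ((a.imp x).imp ((b.imp y).imp ((x.imp (y.imp z)).imp ((a.and b).imp z)))) := by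
  intro v _ _ ha _ hi
  simp only [hi, ha]
  cases v a <;> cases v b <;> cases v x <;> cases v y <;> cases v z <;> rfl

lemma mtaut_pair (x y u w : MForm) :
    MTaut ((y.imp u).imp ((x.imp w).imp ((x.and y).imp (u.and w)))) := by
  intro v _ _ ha _ hi
  simp only [hi, ha]
  cases v x <;> cases v y <;> cases v u <;> cases v w <;> rfl

end Tautologies

section CoS4Tools

lemma CoS4.mp1 {a b : MForm} (t : MTaut (a.imp b)) (h : CoS4 a) : CoS4 b :=
  CoS4.mp (CoS4.taut t) h

lemma CoS4.mp2 {a b c : MForm} (t : MTaut (a.imp (b.imp c)))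
    (h1 : CoS4 a) (h2 : CoS4 b) : CoS4 c :=
  CoS4.mp (CoS4.mp (CoS4.taut t) h1) h2

lemma CoS4.cmp {a b c : MForm} (h1 : CoS4 (a.imp b)) (h2 : CoS4 (b.imp c)) :
    CoS4 (a.imp c) :=
  CoS4.mp2 (mtaut_cmp a b c) h1 h2

lemma CoS4.necK {a b : MForm} (h : CoS4 (a.imp b)) : CoS4 (a.box.imp b.box) :=
  CoS4.mp (CoS4.axK a b) (CoS4.nec h)

lemma CoS4.up {a s : MForm} (h : CoS4 (a.box.imp s)) : CoS4 (a.box.imp s.box) :=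
  CoS4.cmp (CoS4.ax4 a) (CoS4.necK h)

lemma CoS4.boxD2 {p q r : MForm} (h : CoS4 (p.imp (q.imp r))) :
    CoS4 (p.box.imp ((q.box).imp (r.box))) :=
  CoS4.cmp (CoS4.necK h) (CoS4.axK q r)

/-- Gödel translations are stable: `⊢ φ^□ → □(φ^□)`. -/
lemma godelT_stable (φ : Form) : CoS4 ((godelT φ).imp (godelT φ).box) := by
  induction φ with
  | var p => exact CoS4.ax4 _
  | top =>
      exact CoS4.mp1 (mtaut_weak _ _) (CoS4.nec (CoS4.taut mtaut_top))
  | and φ ψ ih1 ih2 =>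
      exact CoS4.mp (CoS4.mp (CoS4.mp (CoS4.taut
        (mtaut_andstep (godelT φ) (godelT ψ) (godelT φ).box (godelT ψ).box
          ((godelT φ).and (godelT ψ)).box)) ih1) ih2)
        (CoS4.boxD2 (CoS4.taut (mtaut_andI (godelT φ) (godelT ψ))))
  | or φ ψ ih1 ih2 =>
      have h1 : CoS4 ((godelT φ).imp ((godelT φ).or (godelT ψ)).box) :=
        CoS4.cmp ih1 (CoS4.necK (CoS4.taut (mtaut_orI1 _ _)))
      have h2 : CoS4 ((godelT ψ).imp ((godelT φ).or (godelT ψ)).box) :=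
        CoS4.cmp ih2 (CoS4.necK (CoS4.taut (mtaut_orI2 _ _)))
      exact CoS4.mp2 (mtaut_orE _ _ _) h1 h2
  | imp φ ψ _ _ => exact CoS4.ax4 _
  | neg φ _ => exact CoS4.axB _

/-- Forward direction: the Gödel translation of every `CoPC` theorem is a
`CoS4` theorem. -/
lemma forward {φ : Form} (h : CoPCThm φ) : CoS4 (godelT φ) := by
  induction h with
  | ax hx =>
      obtain ⟨ψ, χ, rfl⟩ := hx
      exact CoS4.nec (CoS4.up (CoS4.axCo (godelT ψ) (godelT χ)))
  | imp1 φ ψ =>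
      exact CoS4.nec (CoS4.cmp (godelT_stable φ)
        (CoS4.necK (CoS4.taut (mtaut_weak (godelT ψ) (godelT φ)))))
  | imp2 φ ψ χ =>
      have hPQR : CoS4 (((godelT φ).imp ((godelT ψ).imp (godelT χ)).box).imp
          (((godelT φ).imp (godelT ψ)).imp ((godelT φ).imp (godelT χ)))) :=
        CoS4.mp1 (mtaut_imp2 (godelT φ) ((godelT ψ).imp (godelT χ)).box
          (godelT ψ) (godelT χ)) (CoS4.axT ((godelT ψ).imp (godelT χ)))
      exact CoS4.nec (CoS4.up (CoS4.boxD2 hPQR))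
  | topI => exact CoS4.taut mtaut_top
  | andE1 φ ψ => exact CoS4.nec (CoS4.taut (mtaut_andE1 _ _))
  | andE2 φ ψ => exact CoS4.nec (CoS4.taut (mtaut_andE2 _ _))
  | andI φ ψ =>
      exact CoS4.nec (CoS4.cmp (godelT_stable φ)
        (CoS4.necK (CoS4.taut (mtaut_andI (godelT φ) (godelT ψ)))))
  | orI1 φ ψ => exact CoS4.nec (CoS4.taut (mtaut_orI1 _ _))
  | orI2 φ ψ => exact CoS4.nec (CoS4.taut (mtaut_orI2 _ _))
  | orE φ ψ χ =>
      exact CoS4.nec (CoS4.up (CoS4.boxD2 (CoS4.taut (mtaut_orE (godelT φ) (godelT ψ) (godelT χ)))))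
  | negAx φ ψ =>
      have h1 : CoS4 (((godelT ψ).imp (godelT φ)).box.imp
          (((godelT φ).bbox.imp (godelT ψ).bbox).box)) :=
        CoS4.up (CoS4.axCo (godelT ψ) (godelT φ))
      have h2 : CoS4 (((godelT φ).imp (godelT ψ)).box.imp
          (((godelT ψ).bbox.imp (godelT φ).bbox).box)) :=
        CoS4.up (CoS4.axCo (godelT φ) (godelT ψ))
      exact CoS4.nec (CoS4.mp2 (mtaut_pair _ _ _ _) h1 h2)
  | mp _ _ ih1 ih2 =>
      exact CoS4.mp (CoS4.mp (CoS4.axT _) ih1) ih2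

end CoS4Tools

/-! ### The canonical model of CoPC -/

section Canonical

/-- Consequence from a set of hypotheses over `CoPC`. -/
inductive Cn (Γ : Set Form) : Form → Prop
  | thm {φ : Form} : CoPCThm φ → Cn Γ φ
  | mem {φ : Form} : φ ∈ Γ → Cn Γ φ
  | mp {φ ψ : Form} : Cn Γ (φ.imp ψ) → Cn Γ φ → Cn Γ ψ

lemma Cn.mono {Γ Δ : Set Form} (hΓΔ : Γ ⊆ Δ) {φ : Form} (h : Cn Γ φ) : Cn Δ φ := by
  induction h with
  | thm h => exact Cn.thm h
  | mem h => exact Cn.mem (hΓΔ h)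
  | mp _ _ ih1 ih2 => exact Cn.mp ih1 ih2

lemma copc_id (φ : Form) : CoPCThm (φ.imp φ) :=
  Deriv.mp (Deriv.mp (Deriv.imp2 φ (φ.imp φ) φ) (Deriv.imp1 φ (φ.imp φ)))
    (Deriv.imp1 φ φ)

lemma deduction {Γ : Set Form} {ψ φ : Form} (h : Cn (insert ψ Γ) φ) :
    Cn Γ (ψ.imp φ) := by
  induction h with
  | @thm χ h => exact Cn.mp (Cn.thm (Deriv.imp1 χ ψ)) (Cn.thm h)
  | @mem χ h =>
      rcases h with h | h
      · subst h; exact Cn.thm (copc_id _)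
      · exact Cn.mp (Cn.thm (Deriv.imp1 χ ψ)) (Cn.mem h)
  | @mp χ ρ _ _ ih1 ih2 =>
      exact Cn.mp (Cn.mp (Cn.thm (Deriv.imp2 ψ χ ρ)) ih1) ih2

lemma cut {Γ : Set Form} {ψ φ : Form} (h1 : Cn Γ ψ) (h2 : Cn (insert ψ Γ) φ) :
    Cn Γ φ :=
  Cn.mp (deduction h2) h1

lemma cn_empty {φ : Form} (h : Cn ∅ φ) : CoPCThm φ := by
  induction h with
  | thm h => exact h
  | mem h => exact absurd h (Set.notMem_empty _)
  | mp _ _ ih1 ih2 => exact Deriv.mp ih1 ih2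

/-- Prime theories. -/
structure IsPrime (Γ : Set Form) : Prop where
  closed : ∀ {φ : Form}, Cn Γ φ → φ ∈ Γ
  disj : ∀ {φ ψ : Form}, (φ.or ψ) ∈ Γ → φ ∈ Γ ∨ ψ ∈ Γ

lemma cn_sUnion {c : Set (Set Form)} (hc : IsChain (· ⊆ ·) c)
    (hne : c.Nonempty) {φ : Form} (h : Cn (⋃₀ c) φ) : ∃ Δ ∈ c, Cn Δ φ := by
  induction h with
  | thm h => exact ⟨hne.choose, hne.choose_spec, Cn.thm h⟩
  | mem h =>
      obtain ⟨Δ, hΔ, hφ⟩ := h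
      exact ⟨Δ, hΔ, Cn.mem hφ⟩
  | mp _ _ ih1 ih2 =>
      obtain ⟨Δ1, hΔ1, h1⟩ := ih1
      obtain ⟨Δ2, hΔ2, h2⟩ := ih2
      rcases hc.total hΔ1 hΔ2 with hle | hle
      · exact ⟨Δ2, hΔ2, Cn.mp (h1.mono hle) h2⟩
      · exact ⟨Δ1, hΔ1, Cn.mp h1 (h2.mono hle)⟩

/-- Lindenbaum lemma for `CoPC`. -/
lemma lindenbaum {Γ : Set Form} {φ : Form} (h : ¬ Cn Γ φ) :
    ∃ Δ : Set Form, Γ ⊆ Δ ∧ IsPrime Δ ∧ φ ∉ Δ := by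
  obtain ⟨M, hΓM, hM⟩ := zorn_subset_nonempty {Δ : Set Form | ¬ Cn Δ φ}
    (fun c hcS hc hne => by
      refine ⟨⋃₀ c, ?_, fun s hs => Set.subset_sUnion_of_mem hs⟩
      intro hcn
      obtain ⟨Δ, hΔ, hd⟩ := cn_sUnion hc hne hcn
      exact hcS hΔ hd) Γ h
  have hMnd : ¬ Cn M φ := hM.prop
  have hmax : ∀ Δ : Set Form, ¬ Cn Δ φ → M ⊆ Δ → Δ ⊆ M := fun Δ h1 h2 => hM.le_of_ge h1 h2
  have hclosed : ∀ {ψ : Form}, Cn M ψ → ψ ∈ M := by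
    intro ψ hψ
    by_contra hnotin
    have hins : ¬ Cn (insert ψ M) φ := fun hcn => hMnd (cut hψ hcn)
    exact hnotin (hmax _ hins (Set.subset_insert _ _) (Set.mem_insert _ _))
  refine ⟨M, hΓM, ⟨fun h => hclosed h, ?_⟩, fun hφM => hMnd (Cn.mem hφM)⟩
  intro α β hαβ
  by_contra hn
  push_neg at hn
  obtain ⟨hα, hβ⟩ := hn
  have hda : Cn (insert α M) φ := by
    by_contra hda
    exact hα (hmax _ hda (Set.subset_insert _ _) (Set.mem_insert _ _))
  have hdb : Cn (insert β M) φ := by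
    by_contra hdb
    exact hβ (hmax _ hdb (Set.subset_insert _ _) (Set.mem_insert _ _))
  exact hMnd (Cn.mp (Cn.mp (Cn.mp (Cn.thm (Deriv.orE α β φ))
    (deduction hda)) (deduction hdb)) (Cn.mem hαβ))

/-- Worlds of the canonical model: prime theories. -/
def PW : Type := {Γ : Set Form // IsPrime Γ}

def ple (Γ Δ : PW) : Prop := Γ.1 ⊆ Δ.1

def pV (p : ℕ) : Set PW := {Γ : PW | Form.var p ∈ Γ.1}

/-- The canonical negation operator. -/
def pN (A : Set PW) : Set PW :=
  {Γ : PW | ∃ χ : Form, χ.neg ∈ Γ.1 ∧ ∀ Δ : PW, Γ.1 ⊆ Δ.1 → Δ ∈ A → χ ∈ Δ.1}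

/-- If `ψ` holds in every prime extension of `Γ` containing `φ`,
then `φ → ψ ∈ Γ`. -/
lemma imp_mem (Γ : PW) {φ ψ : Form}
    (h : ∀ Δ : PW, Γ.1 ⊆ Δ.1 → φ ∈ Δ.1 → ψ ∈ Δ.1) : φ.imp ψ ∈ Γ.1 := by
  by_contra hnot
  have hcn : ¬ Cn (insert φ Γ.1) ψ := by
    intro hcn
    exact hnot (Γ.2.closed (deduction hcn))
  obtain ⟨Δ, hsub, hprime, hψ⟩ := lindenbaum hcn
  exact hψ (h ⟨Δ, hprime⟩ (fun χ hχ => hsub (Set.mem_insert_of_mem _ hχ))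
    (hsub (Set.mem_insert _ _)))

/-- The truth lemma for Gödel translations in the canonical model. -/
lemma truth_lemma (ψ : Form) :
    MSat ple pN pV (godelT ψ) = {Γ : PW | ψ ∈ Γ.1} := by
  induction ψ with
  | var p =>
      ext Γ
      simp only [godelT, MSat, Set.mem_setOf_eq]
      constructor
      · intro h; exact h Γ (fun _ hx => hx)
      · intro h Δ hΔ; exact hΔ h
  | top =>
      ext Γ
      simp only [godelT, MSat, Set.mem_univ, Set.mem_setOf_eq, true_iff]
      exact Γ.2.closed (Cn.thm Deriv.topI)
  | and φ χ ih1 ih2 =>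
      ext Γ
      simp only [godelT, MSat, ih1, ih2, Set.mem_inter_iff, Set.mem_setOf_eq]
      constructor
      · rintro ⟨h1, h2⟩
        exact Γ.2.closed (Cn.mp (Cn.mp (Cn.thm (Deriv.andI φ χ)) (Cn.mem h1)) (Cn.mem h2))
      · intro h
        exact ⟨Γ.2.closed (Cn.mp (Cn.thm (Deriv.andE1 φ χ)) (Cn.mem h)),
          Γ.2.closed (Cn.mp (Cn.thm (Deriv.andE2 φ χ)) (Cn.mem h))⟩
  | or φ χ ih1 ih2 =>
      ext Γ
      simp only [godelT, MSat, ih1, ih2, Set.mem_union, Set.mem_setOf_eq]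
      constructor
      · rintro (h | h)
        · exact Γ.2.closed (Cn.mp (Cn.thm (Deriv.orI1 φ χ)) (Cn.mem h))
        · exact Γ.2.closed (Cn.mp (Cn.thm (Deriv.orI2 φ χ)) (Cn.mem h))
      · exact Γ.2.disj
  | imp φ χ ih1 ih2 =>
      ext Γ
      simp only [godelT, MSat, ih1, ih2, Set.mem_setOf_eq]
      constructor
      · intro h
        exact imp_mem Γ (fun Δ hΔ hφ => h Δ hΔ hφ)
      · intro h Δ hΔ hφ
        exact Δ.2.closed (Cn.mp (Cn.mem (hΔ h)) (Cn.mem hφ))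
  | neg φ ih =>
      ext Γ
      simp only [godelT, MSat, ih, pN, Set.mem_setOf_eq]
      constructor
      · rintro ⟨χ, hχ, hsub⟩
        have himp : φ.imp χ ∈ Γ.1 := imp_mem Γ hsub
        exact Γ.2.closed (Cn.mp (Cn.mp (Cn.thm (Deriv.ax ⟨φ, χ, rfl⟩))
          (Cn.mem himp)) (Cn.mem hχ))
      · intro h
        exact ⟨φ, h, fun Δ _ hφ => hφ⟩

/-- Soundness of `CoS4` over the canonical model. -/
lemma sound {μ : MForm} (h : CoS4 μ) : ∀ Γ : PW, Γ ∈ MSat ple pN pV μ := by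
  induction h with
  | @taut φ ht =>
      intro Γ
      have key := ht (fun χ => if Γ ∈ MSat ple pN pV χ then true else false)
        (by simp [MSat]) (by simp [MSat])
        (by
          intro a b
          by_cases ha : Γ ∈ MSat ple pN pV a <;>
            by_cases hb : Γ ∈ MSat ple pN pV b <;>
            simp [MSat, ha, hb])
        (by
          intro a b
          by_cases ha : Γ ∈ MSat ple pN pV a <;>
            by_cases hb : Γ ∈ MSat ple pN pV b <;>
            simp [MSat, ha, hb])
        (by
          intro a b
          by_cases ha : Γ ∈ MSat ple pN pV a <;>
            by_cases hb : Γ ∈ MSat ple pN pV b <;>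
            simp [MSat, ha, hb])
      by_cases hφ : Γ ∈ MSat ple pN pV φ
      · exact hφ
      · simp [hφ] at key
  | axK φ ψ =>
      intro Γ h1 h2 Δ hΔ
      exact h1 Δ hΔ (h2 Δ hΔ)
  | axT φ =>
      intro Γ h
      exact h Γ (fun _ hx => hx)
  | ax4 φ =>
      intro Γ h Δ hΔ E hE
      exact h E (fun x hx => hE (hΔ hx))
  | axCo φ ψ =>
      rintro Γ h1 ⟨χ, hχ, hsub⟩
      exact ⟨χ, hχ, fun Δ hΔ hA => hsub Δ hΔ (h1 Δ hΔ hA)⟩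
  | axB φ =>
      rintro Γ ⟨χ, hχ, hsub⟩ Δ hΔ
      exact ⟨χ, hΔ hχ, fun E hE hA => hsub E (fun x hx => hE (hΔ hx)) hA⟩
  | mp _ _ ih1 ih2 =>
      intro Γ
      exact ih1 Γ (ih2 Γ)
  | nec _ ih =>
      intro Γ Δ _
      exact ih Δ

/-- Backward direction. -/
lemma backward {φ : Form} (h : CoS4 (godelT φ)) : CoPCThm φ := by
  by_contra hn
  have hcn : ¬ Cn ∅ φ := fun hc => hn (cn_empty hc)
  obtain ⟨Δ, _, hprime, hφ⟩ := lindenbaum hcn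
  have := sound h ⟨Δ, hprime⟩
  rw [truth_lemma] at this
  exact hφ this

end Canonical

/-- `CoS4` is a modal companion of contraposition logic:
`CoPC ⊢ φ` iff `CoS4 ⊢ φ^□`. -/
theorem stmt19 (φ : Form) : CoPCThm φ ↔ CoS4 (godelT φ) :=
  ⟨forward, backward⟩
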